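/- (G-fractional Picone inequality) Let G be an N-function whose derivative g = G' satisfies p⁻ ≤ t g(t)/G(t) ≤ p⁺ for all t > 0, and let 1 < q ≤ p⁻. Then there exists a constant C = C(p⁻, p⁺, G(1)) > 0 such that for all real numbers a, b > 0 and c, d ≥ 0: g(|a − b|)·((a − b)/|a − b|)·(c^q/a^{q−1} − d^q/b^{q−1}) ≤ C · max{ (G(|c − d|)/G(1))^{q/p⁺}, (G(|c − d|)/G(1))^{q/p⁻} } · max{ (G(|a − b|)/G(1))^{(p⁻ − q)/p⁺}, (G(|a − b|)/G(1))^{(p⁺ − q)/p⁻} }, where the left-hand side is interpreted as 0 when a = b. -/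

import Mathlib

open MeasureTheory Filter Set

noncomputable section

/-- An N-function: continuous, convex on `[0,∞)`, vanishing exactly at `0`,
with `G t / t → 0` as `t → 0⁺` and `G t / t → ∞` as `t → ∞`. -/
def IsNFunction (G : ℝ → ℝ) : Prop :=
  ContinuousOn G (Set.Ici 0) ∧ ConvexOn ℝ (Set.Ici 0) G ∧
  (∀ t : ℝ, 0 ≤ t → (G t = 0 ↔ t = 0)) ∧
  Tendsto (fun t => G t / t) (nhdsWithin 0 (Set.Ioi 0)) (nhds 0) ∧
  Tendsto (fun t => G t / t) atTop atTop

private lemma picone_core {q a b c d : ℝ} (hq : 1 < q) (hb : 0 < b) (hab : b < a)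
    (hc : 0 ≤ c) (hd : 0 ≤ d) :
    c ^ q / a ^ (q - 1) ≤ |c - d| ^ q / (a - b) ^ (q - 1) + d ^ q / b ^ (q - 1) := by
  have ha : 0 < a := hb.trans hab
  have ht : 0 < a - b := sub_pos.2 hab
  have hq0 : (0:ℝ) ≤ q := by linarith
  have hq1' : (0:ℝ) ≤ q - 1 := by linarith
  set t := a - b with htdef
  have hcd : (0:ℝ) ≤ |c - d| := abs_nonneg _
  -- convexity step
  have hcv := convexOn_rpow hq.le
  have hu : (a / t) * |c - d| ∈ Ici (0:ℝ) := by
    simp only [mem_Ici]; positivity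
  have hv : (a / b) * d ∈ Ici (0:ℝ) := by
    simp only [mem_Ici]; positivity
  have hsum : t / a + b / a = 1 := by field_simp; rw [htdef]; ring
  have hconv := hcv.2 hu hv (by positivity : (0:ℝ) ≤ t / a) (by positivity : (0:ℝ) ≤ b / a) hsum
  simp only [smul_eq_mul] at hconv
  have harg : t / a * (a / t * |c - d|) + b / a * (a / b * d) = |c - d| + d := by
    field_simp
  rw [harg] at hconv
  have hcle : c ≤ |c - d| + d := by
    rcases abs_cases (c - d) with ⟨h1, _⟩ | ⟨h1, _⟩ <;> linarith
  have hstep1 : c ^ q ≤ (|c - d| + d) ^ q := Real.rpow_le_rpow hc hcle hq0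
  have hmulu : (a / t * |c - d|) ^ q = (a / t) ^ q * |c - d| ^ q :=
    Real.mul_rpow (by positivity) hcd
  have hmulv : (a / b * d) ^ q = (a / b) ^ q * d ^ q := Real.mul_rpow (by positivity) hd
  rw [hmulu, hmulv] at hconv
  have hco1 : t / a * ((a / t) ^ q * |c - d| ^ q) = (a / t) ^ (q - 1) * |c - d| ^ q := by
    rw [show q = (q - 1) + 1 by ring, Real.rpow_add (by positivity : (0:ℝ) < a / t)]
    rw [Real.rpow_one]
    field_simp
    ring
  have hco2 : b / a * ((a / b) ^ q * d ^ q) = (a / b) ^ (q - 1) * d ^ q := by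
    rw [show q = (q - 1) + 1 by ring, Real.rpow_add (by positivity : (0:ℝ) < a / b)]
    rw [Real.rpow_one]
    field_simp
    ring
  rw [hco1, hco2] at hconv
  have key : c ^ q ≤ (a / t) ^ (q - 1) * |c - d| ^ q + (a / b) ^ (q - 1) * d ^ q :=
    hstep1.trans hconv
  rw [Real.div_rpow ha.le ht.le, Real.div_rpow ha.le hb.le] at key
  have haq : (0:ℝ) < a ^ (q - 1) := Real.rpow_pos_of_pos ha _
  have htq : (0:ℝ) < t ^ (q - 1) := Real.rpow_pos_of_pos ht _
  have hbq : (0:ℝ) < b ^ (q - 1) := Real.rpow_pos_of_pos hb _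
  rw [div_le_iff₀ haq]
  have : a ^ (q - 1) / t ^ (q - 1) * |c - d| ^ q + a ^ (q - 1) / b ^ (q - 1) * d ^ q
      = (|c - d| ^ q / t ^ (q - 1) + d ^ q / b ^ (q - 1)) * a ^ (q - 1) := by
    field_simp
  rw [this] at key
  exact key

private lemma picone_sign {q : ℝ} (hq : 1 < q) {a b c d : ℝ} (ha : 0 < a) (hb : 0 < b)
    (hc : 0 ≤ c) (hd : 0 ≤ d) (hab : a ≠ b) :
    Real.sign (a - b) * (c ^ q / a ^ (q - 1) - d ^ q / b ^ (q - 1))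
      ≤ |c - d| ^ q / |a - b| ^ (q - 1) := by
  rcases hab.lt_or_gt with h | h
  · -- a < b
    rw [Real.sign_of_neg (by linarith : a - b < 0), abs_of_neg (by linarith : a - b < 0),
      abs_sub_comm c d]
    have hkey := picone_core hq ha h hd hc
    have : -(a - b) = b - a := by ring
    rw [this]
    nlinarith [hkey]
  · -- b < a
    rw [Real.sign_of_pos (by linarith : (0:ℝ) < a - b), one_mul,
      abs_of_pos (by linarith : (0:ℝ) < a - b)]
    have hkey := picone_core hq hb h hc hd
    linarith

/-- G-fractional Picone inequality: if `G` is an N-function whose derivative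
`g = G'` satisfies `p⁻ ≤ t g(t)/G(t) ≤ p⁺` for all `t > 0`, and `1 < q ≤ p⁻`, then there
is `C = C(p⁻,p⁺,G(1)) > 0` such that for all `a, b > 0` and `c, d ≥ 0`,
`g(|a−b|) sign(a−b) (c^q/a^{q−1} − d^q/b^{q−1})` is bounded by
`C · max{(G|c−d|/G 1)^{q/p⁺}, (G|c−d|/G 1)^{q/p⁻}} ·
 max{(G|a−b|/G 1)^{(p⁻−q)/p⁺}, (G|a−b|/G 1)^{(p⁺−q)/p⁻}}`
(the left-hand side being `0` when `a = b`, since `sign 0 = 0`). -/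
theorem G_fractional_Picone_inequality
    (G g : ℝ → ℝ) (pm pp : ℝ) (hG : IsNFunction G)
    (hGg : ∀ t : ℝ, 0 < t → HasDerivAt G (g t) t)
    (hbound : ∀ t : ℝ, 0 < t → pm ≤ t * g t / G t ∧ t * g t / G t ≤ pp)
    (q : ℝ) (hq1 : 1 < q) (hqpm : q ≤ pm) :
    ∃ C : ℝ, 0 < C ∧ ∀ a b c d : ℝ, 0 < a → 0 < b → 0 ≤ c → 0 ≤ d →
      g |a - b| * Real.sign (a - b) * (c ^ q / a ^ (q - 1) - d ^ q / b ^ (q - 1))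
        ≤ C * max ((G |c - d| / G 1) ^ (q / pp)) ((G |c - d| / G 1) ^ (q / pm))
            * max ((G |a - b| / G 1) ^ ((pm - q) / pp)) ((G |a - b| / G 1) ^ ((pp - q) / pm)) := by
  obtain ⟨hGc, hGconv, hGzero, hGlim0, hGlimtop⟩ := hG
  have hG0 : G 0 = 0 := (hGzero 0 le_rfl).2 rfl
  -- G is positive on (0,∞)
  have hGpos : ∀ t : ℝ, 0 < t → 0 < G t := by
    intro t ht
    have hslope : ∀ s : ℝ, 0 < s → s < t → G s / s ≤ G t / t := by
      intro s hs hst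
      have h1 : G (s / t * t + (1 - s / t) * 0) ≤ s / t * G t + (1 - s / t) * G 0 := by
        have := hGconv.2 (mem_Ici.2 ht.le) (mem_Ici.2 le_rfl)
          (show (0:ℝ) ≤ s / t by positivity)
          (show (0:ℝ) ≤ 1 - s / t by have := (div_lt_one ht).2 hst; linarith)
          (by ring)
        simpa using this
      simp only [mul_zero, add_zero] at h1
      rw [show s / t * t = s by field_simp] at h1
      rw [hG0, mul_zero, add_zero] at h1
      rw [div_le_div_iff₀ hs ht]
      calc G s * t ≤ s / t * G t * t := by nlinarith
        _ = G t * s := by field_simp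
    have hnn : 0 ≤ G t / t := by
      refine le_of_tendsto hGlim0 ?_
      filter_upwards [Ioo_mem_nhdsGT_of_mem (Set.left_mem_Ico.2 ht)] with s hs
      exact hslope s hs.1 hs.2
    have hGt0 : 0 ≤ G t := by
      have := mul_nonneg hnn ht.le
      rwa [div_mul_cancel₀ _ ht.ne'] at this
    rcases hGt0.lt_or_eq with h | h
    · exact h
    · exact absurd ((hGzero t ht.le).1 h.symm) ht.ne'
  have hG1 : 0 < G 1 := hGpos 1 one_pos
  have hGnn : ∀ x : ℝ, 0 ≤ x → 0 ≤ G x := by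
    intro x hx
    rcases hx.lt_or_eq with h | h
    · exact (hGpos x h).le
    · rw [← h, hG0]
  have hpm1 : 1 < pm := lt_of_lt_of_le hq1 hqpm
  have hpm0 : 0 < pm := by linarith
  have hpmpp : pm ≤ pp := le_trans (hbound 1 one_pos).1 (hbound 1 one_pos).2
  have hpp0 : 0 < pp := lt_of_lt_of_le hpm0 hpmpp
  have hq0 : 0 < q := by linarith
  -- multiplied form of the bounds
  have hg : ∀ t : ℝ, 0 < t → pm * G t ≤ t * g t ∧ t * g t ≤ pp * G t := by
    intro t ht
    have h := hbound t ht
    have hGt := hGpos t ht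
    exact ⟨(le_div_iff₀ hGt).1 h.1, (div_le_iff₀ hGt).1 h.2⟩
  -- derivative of G x / x ^ r
  have hasD : ∀ r : ℝ, ∀ x : ℝ, 0 < x →
      HasDerivAt (fun y => G y / y ^ r)
        ((g x * x ^ r - G x * (r * x ^ (r - 1))) / (x ^ r) ^ 2) x := by
    intro r x hx
    exact (hGg x hx).div (Real.hasDerivAt_rpow_const (Or.inl hx.ne'))
      (Real.rpow_pos_of_pos hx r).ne'
  have hmono : MonotoneOn (fun x => G x / x ^ pm) (Ioi 0) := by
    apply monotoneOn_of_deriv_nonneg (convex_Ioi 0)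
    · intro x hx
      exact (hasD pm x hx).continuousAt.continuousWithinAt
    · rw [interior_Ioi]
      intro x hx
      exact (hasD pm x hx).differentiableAt.differentiableWithinAt
    · rw [interior_Ioi]
      intro x hx
      rw [(hasD pm x hx).deriv]
      apply div_nonneg _ (by positivity)
      have h1 := (hg x hx).1
      have hxr : x ^ pm = x ^ (pm - 1) * x := by
        rw [← Real.rpow_add_one hx.ne']; ring_nf
      have hx1 : (0:ℝ) ≤ x ^ (pm - 1) := (Real.rpow_pos_of_pos hx _).le
      rw [hxr]
      nlinarith [mul_nonneg hx1 (sub_nonneg.2 h1)]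
  have hanti : AntitoneOn (fun x => G x / x ^ pp) (Ioi 0) := by
    apply antitoneOn_of_deriv_nonpos (convex_Ioi 0)
    · intro x hx
      exact (hasD pp x hx).continuousAt.continuousWithinAt
    · rw [interior_Ioi]
      intro x hx
      exact (hasD pp x hx).differentiableAt.differentiableWithinAt
    · rw [interior_Ioi]
      intro x hx
      rw [(hasD pp x hx).deriv]
      apply div_nonpos_of_nonpos_of_nonneg _ (by positivity)
      have h2 := (hg x hx).2
      have hxr : x ^ pp = x ^ (pp - 1) * x := by
        rw [← Real.rpow_add_one hx.ne']; ring_nf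
      have hx1 : (0:ℝ) ≤ x ^ (pp - 1) := (Real.rpow_pos_of_pos hx _).le
      rw [hxr]
      nlinarith [mul_nonneg hx1 (sub_nonneg.2 h2)]
  -- four comparison estimates
  have hup_small : ∀ x : ℝ, 0 < x → x ≤ 1 → G x ≤ x ^ pm * G 1 := by
    intro x hx hx1
    have := hmono (mem_Ioi.2 hx) (mem_Ioi.2 one_pos) hx1
    simp only [Real.one_rpow, div_one] at this
    calc G x = G x / x ^ pm * x ^ pm := by
          rw [div_mul_cancel₀ _ (Real.rpow_pos_of_pos hx pm).ne']
      _ ≤ G 1 * x ^ pm := by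
          exact mul_le_mul_of_nonneg_right this (Real.rpow_pos_of_pos hx pm).le
      _ = x ^ pm * G 1 := by ring
  have hlow_small : ∀ x : ℝ, 0 ≤ x → x ≤ 1 → x ^ pp * G 1 ≤ G x := by
    intro x hx hx1
    rcases hx.lt_or_eq with h | h
    · have := hanti (mem_Ioi.2 h) (mem_Ioi.2 one_pos) hx1
      simp only [Real.one_rpow, div_one] at this
      calc x ^ pp * G 1 ≤ x ^ pp * (G x / x ^ pp) :=
            mul_le_mul_of_nonneg_left this (Real.rpow_pos_of_pos h pp).le
        _ = G x := by
            rw [mul_div_cancel₀ _ (Real.rpow_pos_of_pos h pp).ne']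
    · rw [← h, Real.zero_rpow hpp0.ne', zero_mul, hG0]
  have hlow_big : ∀ x : ℝ, 1 ≤ x → x ^ pm * G 1 ≤ G x := by
    intro x hx1
    have := hmono (mem_Ioi.2 one_pos) (mem_Ioi.2 (by linarith : (0:ℝ) < x)) hx1
    simp only [Real.one_rpow, div_one] at this
    have hxp : (0:ℝ) < x ^ pm := Real.rpow_pos_of_pos (by linarith) pm
    calc x ^ pm * G 1 ≤ x ^ pm * (G x / x ^ pm) :=
          mul_le_mul_of_nonneg_left this hxp.le
      _ = G x := by rw [mul_div_cancel₀ _ hxp.ne']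
  have hup_big : ∀ x : ℝ, 1 ≤ x → G x ≤ x ^ pp * G 1 := by
    intro x hx1
    have := hanti (mem_Ioi.2 one_pos) (mem_Ioi.2 (by linarith : (0:ℝ) < x)) hx1
    simp only [Real.one_rpow, div_one] at this
    have hxp : (0:ℝ) < x ^ pp := Real.rpow_pos_of_pos (by linarith) pp
    calc G x = G x / x ^ pp * x ^ pp := by rw [div_mul_cancel₀ _ hxp.ne']
      _ ≤ G 1 * x ^ pp := mul_le_mul_of_nonneg_right this hxp.le
      _ = x ^ pp * G 1 := by ring
  refine ⟨pp * G 1, mul_pos hpp0 hG1, ?_⟩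
  intro a b c d ha hb hc hd
  set s := |c - d| with hsdef
  set t := |a - b| with htdef
  have hs0 : 0 ≤ s := abs_nonneg _
  have hGs : 0 ≤ G s / G 1 := div_nonneg (hGnn s hs0) hG1.le
  have hGt' : 0 ≤ G t / G 1 := div_nonneg (hGnn t (abs_nonneg _)) hG1.le
  set Ms := max ((G s / G 1) ^ (q / pp)) ((G s / G 1) ^ (q / pm)) with hMsdef
  set Mt := max ((G t / G 1) ^ ((pm - q) / pp)) ((G t / G 1) ^ ((pp - q) / pm)) with hMtdef
  have hMs0 : 0 ≤ Ms := le_trans (Real.rpow_nonneg hGs _) (le_max_left _ _)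
  have hMt0 : 0 ≤ Mt := le_trans (Real.rpow_nonneg hGt' _) (le_max_left _ _)
  rcases eq_or_ne a b with rfl | hab
  · rw [sub_self, Real.sign_zero, mul_zero, zero_mul]
    exact mul_nonneg (mul_nonneg (mul_pos hpp0 hG1).le hMs0) hMt0
  -- main case a ≠ b
  have ht0 : 0 < t := abs_pos.2 (sub_ne_zero.2 hab)
  have hGt0 : 0 < G t := hGpos t ht0
  have hpic := picone_sign hq1 ha hb hc hd hab
  have hgt0 : 0 ≤ g t := by
    have h1 := (hg t ht0).1
    nlinarith [hGpos t ht0]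
  -- step 1 : bound s ^ q ≤ Ms
  have hs_bound : s ^ q ≤ Ms := by
    rcases le_or_gt s 1 with h | h
    · have h1 : s ^ pp ≤ G s / G 1 := (le_div_iff₀ hG1).2 (hlow_small s hs0 h)
      have h2 : (s ^ pp) ^ (q / pp) ≤ (G s / G 1) ^ (q / pp) :=
        Real.rpow_le_rpow (Real.rpow_nonneg hs0 _) h1 (by positivity)
      have h3 : (s ^ pp) ^ (q / pp) = s ^ q := by
        rw [← Real.rpow_mul hs0, show pp * (q / pp) = q by field_simp]
      rw [h3] at h2
      exact h2.trans (le_max_left _ _)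
    · have h1 : s ^ pm ≤ G s / G 1 := (le_div_iff₀ hG1).2 (hlow_big s h.le)
      have h2 : (s ^ pm) ^ (q / pm) ≤ (G s / G 1) ^ (q / pm) :=
        Real.rpow_le_rpow (Real.rpow_nonneg hs0 _) h1 (by positivity)
      have h3 : (s ^ pm) ^ (q / pm) = s ^ q := by
        rw [← Real.rpow_mul hs0, show pm * (q / pm) = q by field_simp]
      rw [h3] at h2
      exact h2.trans (le_max_right _ _)
  -- step 2 : bound G t ≤ t ^ q * G 1 * Mt
  have ht_bound : G t ≤ t ^ q * G 1 * Mt := by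
    have hX0 : 0 < G t / G 1 := div_pos hGt0 hG1
    rcases le_or_gt t 1 with h | h
    · have h1 : G t / G 1 ≤ t ^ pm := (div_le_iff₀ hG1).2 (hup_small t ht0 h)
      have hX1 : G t / G 1 ≤ 1 := by
        have : t ^ pm ≤ 1 := Real.rpow_le_one ht0.le h hpm0.le
        linarith
      have h2 : (G t / G 1) ^ (q / pm) ≤ (t ^ pm) ^ (q / pm) :=
        Real.rpow_le_rpow hX0.le h1 (by positivity)
      have h3 : (t ^ pm) ^ (q / pm) = t ^ q := by
        rw [← Real.rpow_mul ht0.le, show pm * (q / pm) = q by field_simp]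
      rw [h3] at h2
      have h4 : (G t / G 1) ^ ((pm - q) / pm) ≤ (G t / G 1) ^ ((pm - q) / pp) := by
        apply Real.rpow_le_rpow_of_exponent_ge hX0 hX1
        apply div_le_div_of_nonneg_left (by linarith) hpm0 hpmpp
      have hsplit : G t = G 1 * ((G t / G 1) ^ (q / pm) * (G t / G 1) ^ ((pm - q) / pm)) := by
        rw [← Real.rpow_add hX0, show q / pm + (pm - q) / pm = 1 by field_simp; ring]
        rw [Real.rpow_one]
        field_simp
      rw [hsplit]
      have h5 : (G t / G 1) ^ ((pm - q) / pp) ≤ Mt := le_max_left _ _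
      calc G 1 * ((G t / G 1) ^ (q / pm) * (G t / G 1) ^ ((pm - q) / pm))
          ≤ G 1 * (t ^ q * Mt) := by
            apply mul_le_mul_of_nonneg_left _ hG1.le
            exact mul_le_mul h2 (h4.trans h5) (Real.rpow_nonneg hX0.le _)
              (by positivity)
        _ = t ^ q * G 1 * Mt := by ring
    · have h1 : G t / G 1 ≤ t ^ pp := (div_le_iff₀ hG1).2 (hup_big t h.le)
      have hX1 : 1 ≤ G t / G 1 := by
        have h1' : (1:ℝ) ≤ t ^ pm := Real.one_le_rpow h.le hpm0.le
        have := (le_div_iff₀ hG1).2 (hlow_big t h.le)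
        linarith
      have h2 : (G t / G 1) ^ (q / pp) ≤ (t ^ pp) ^ (q / pp) :=
        Real.rpow_le_rpow hX0.le h1 (by positivity)
      have h3 : (t ^ pp) ^ (q / pp) = t ^ q := by
        rw [← Real.rpow_mul ht0.le, show pp * (q / pp) = q by field_simp]
      rw [h3] at h2
      have h4 : (G t / G 1) ^ ((pp - q) / pp) ≤ (G t / G 1) ^ ((pp - q) / pm) := by
        apply Real.rpow_le_rpow_of_exponent_le hX1
        apply div_le_div_of_nonneg_left (by linarith) hpm0 hpmpp
      have hsplit : G t = G 1 * ((G t / G 1) ^ (q / pp) * (G t / G 1) ^ ((pp - q) / pp)) := by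
        rw [← Real.rpow_add hX0, show q / pp + (pp - q) / pp = 1 by field_simp; ring]
        rw [Real.rpow_one]
        field_simp
      rw [hsplit]
      have h5 : (G t / G 1) ^ ((pp - q) / pm) ≤ Mt := le_max_right _ _
      calc G 1 * ((G t / G 1) ^ (q / pp) * (G t / G 1) ^ ((pp - q) / pp))
          ≤ G 1 * (t ^ q * Mt) := by
            apply mul_le_mul_of_nonneg_left _ hG1.le
            exact mul_le_mul h2 (h4.trans h5) (Real.rpow_nonneg hX0.le _)
              (by positivity)
        _ = t ^ q * G 1 * Mt := by ring
  -- assemble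
  have htq : 0 < t ^ q := Real.rpow_pos_of_pos ht0 q
  have htq1 : 0 < t ^ (q - 1) := Real.rpow_pos_of_pos ht0 (q - 1)
  have hsq : 0 ≤ s ^ q := Real.rpow_nonneg hs0 q
  have step1 : g t * Real.sign (a - b) * (c ^ q / a ^ (q - 1) - d ^ q / b ^ (q - 1))
      ≤ g t * (s ^ q / t ^ (q - 1)) := by
    rw [mul_assoc]
    exact mul_le_mul_of_nonneg_left hpic hgt0
  have step2 : g t * (s ^ q / t ^ (q - 1)) ≤ (pp * G t / t) * (s ^ q / t ^ (q - 1)) := by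
    apply mul_le_mul_of_nonneg_right _ (by positivity)
    have h2 := (hg t ht0).2
    rw [le_div_iff₀ ht0]
    linarith [h2]
  have step3 : (pp * G t / t) * (s ^ q / t ^ (q - 1)) = pp * (G t * s ^ q / t ^ q) := by
    have ht' : t ^ q = t ^ (q - 1) * t := by
      rw [show q = (q - 1) + 1 by ring, Real.rpow_add_one ht0.ne']; ring_nf
    rw [ht']
    field_simp
  have step4 : pp * (G t * s ^ q / t ^ q) ≤ pp * G 1 * Ms * Mt := by
    have h1 : G t * s ^ q ≤ (t ^ q * G 1 * Mt) * Ms :=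
      mul_le_mul ht_bound hs_bound hsq (by positivity)
    have h2 : G t * s ^ q / t ^ q ≤ G 1 * Ms * Mt := by
      rw [div_le_iff₀ htq]
      calc G t * s ^ q ≤ t ^ q * G 1 * Mt * Ms := h1
        _ = G 1 * Ms * Mt * t ^ q := by ring
    calc pp * (G t * s ^ q / t ^ q) ≤ pp * (G 1 * Ms * Mt) :=
          mul_le_mul_of_nonneg_left h2 hpp0.le
      _ = pp * G 1 * Ms * Mt := by ring
  calc g t * Real.sign (a - b) * (c ^ q / a ^ (q - 1) - d ^ q / b ^ (q - 1))
      ≤ g t * (s ^ q / t ^ (q - 1)) := step1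
    _ ≤ (pp * G t / t) * (s ^ q / t ^ (q - 1)) := step2
    _ = pp * (G t * s ^ q / t ^ q) := step3
    _ ≤ pp * G 1 * Ms * Mt := step4
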